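/- Let β ≥ 0 and r ≥ 0, let μ, μ̃ : [0,∞) → [0,∞) be continuous, and let φ : [0,∞) → [0,∞) be a nondecreasing convex function with φ(0) = 0. Define α : [0,∞) → ℝ by α(t) := e^{−t} / (1 + sup_{s∈[0,t]} exp(β·∫₀ˢ μ(r) dr)·μ̃(s)). Then: (i) α takes values in (0,1] and is non-increasing; and (ii) ∫₀^∞ exp(β·∫₀ᵗ μ(s) ds)·μ̃(t)·φ(r·α(t)) dt ≤ φ(r). -/

import Mathlib

open MeasureTheory

/-- Remark 3.3(iv): with `α(t) := e^{−t}/(1 + sup_{s∈[0,t]} exp(β∫₀ˢμ)·μ̃(s))`,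
the process `α` takes values in `(0,1]` and is non-increasing, and for every
nondecreasing convex `φ : [0,∞) → [0,∞)` with `φ(0) = 0` and every `r ≥ 0`,
`∫₀^∞ exp(β∫₀ᵗμ)·μ̃(t)·φ(r·α(t)) dt ≤ φ(r)`. -/
theorem growth_H3a_implies_H3 (β r : ℝ) (hβ : 0 ≤ β) (hr : 0 ≤ r)
    (μ μt : ℝ → ℝ)
    (hμc : ContinuousOn μ (Set.Ici 0)) (hμ0 : ∀ t ∈ Set.Ici (0:ℝ), 0 ≤ μ t)
    (hμtc : ContinuousOn μt (Set.Ici 0)) (hμt0 : ∀ t ∈ Set.Ici (0:ℝ), 0 ≤ μt t)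
    (φ : ℝ → ℝ) (hφ0 : ∀ x ∈ Set.Ici (0:ℝ), 0 ≤ φ x)
    (hφmono : MonotoneOn φ (Set.Ici 0)) (hφconv : ConvexOn ℝ (Set.Ici 0) φ)
    (hφzero : φ 0 = 0)
    (α : ℝ → ℝ)
    (hα : ∀ t, α t = Real.exp (-t) /
      (1 + sSup ((fun s => Real.exp (β * ∫ u in Set.Ioc (0:ℝ) s, μ u) * μt s) ''
        Set.Icc 0 t))) :
    (∀ t ∈ Set.Ici (0:ℝ), 0 < α t ∧ α t ≤ 1) ∧
      AntitoneOn α (Set.Ici 0) ∧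
      ∫ t in Set.Ici (0:ℝ),
          Real.exp (β * ∫ u in Set.Ioc (0:ℝ) t, μ u) * μt t * φ (r * α t) ≤ φ r := by
  set f : ℝ → ℝ := fun s => Real.exp (β * ∫ u in Set.Ioc (0:ℝ) s, μ u) * μt s with hf
  set M : ℝ → ℝ := fun t => sSup (f '' Set.Icc 0 t) with hM
  -- f is continuous on every Icc 0 t with t ≥ 0
  have hfc : ∀ t : ℝ, 0 ≤ t → ContinuousOn f (Set.Icc 0 t) := by
    intro t ht
    have hμint : IntegrableOn μ (Set.Icc 0 t) :=
      (hμc.mono (Set.Icc_subset_Ici_self)).integrableOn_compact isCompact_Icc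
    have hF : ContinuousOn (fun s => ∫ u in Set.Ioc (0:ℝ) s, μ u) (Set.Icc 0 t) :=
      intervalIntegral.continuousOn_primitive hμint
    exact ((Real.continuous_exp.comp_continuousOn (continuousOn_const.mul hF))).mul
      (hμtc.mono Set.Icc_subset_Ici_self)
  have hf0 : ∀ s : ℝ, 0 ≤ s → 0 ≤ f s := fun s hs =>
    mul_nonneg (Real.exp_pos _).le (hμt0 s hs)
  have hbdd : ∀ t : ℝ, 0 ≤ t → BddAbove (f '' Set.Icc 0 t) := fun t ht =>
    (isCompact_Icc.image_of_continuousOn (hfc t ht)).bddAbove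
  have hM0 : ∀ t : ℝ, 0 ≤ t → 0 ≤ M t := by
    intro t ht
    exact le_trans (hf0 0 le_rfl)
      (le_csSup (hbdd t ht) ⟨0, ⟨le_rfl, ht⟩, rfl⟩)
  have hfM : ∀ t : ℝ, 0 ≤ t → f t ≤ M t := fun t ht =>
    le_csSup (hbdd t ht) ⟨t, ⟨ht, le_rfl⟩, rfl⟩
  have hMmono : ∀ s t : ℝ, 0 ≤ s → s ≤ t → M s ≤ M t := by
    intro s t hs hst
    exact csSup_le_csSup (hbdd t (hs.trans hst))
      ((Set.nonempty_Icc.2 hs).image f)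
      (Set.image_mono (f := f) (Set.Icc_subset_Icc_right hst))
  have hαval : ∀ t, α t = Real.exp (-t) / (1 + M t) := hα
  have hDpos : ∀ t : ℝ, 0 ≤ t → (0:ℝ) < 1 + M t := fun t ht => by linarith [hM0 t ht]
  -- (i)
  have hi : ∀ t ∈ Set.Ici (0:ℝ), 0 < α t ∧ α t ≤ 1 := by
    intro t ht
    rw [hαval t]
    constructor
    · exact div_pos (Real.exp_pos _) (hDpos t ht)
    · rw [div_le_one (hDpos t ht)]
      have : Real.exp (-t) ≤ 1 := Real.exp_le_one_iff.2 (by linarith [Set.mem_Ici.1 ht])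
      linarith [hM0 t ht]
  refine ⟨hi, ?_, ?_⟩
  · -- antitone
    intro s hs t ht hst
    rw [hαval s, hαval t]
    exact div_le_div₀ (Real.exp_nonneg _) (Real.exp_le_exp.2 (by linarith))
      (hDpos s hs) (by linarith [hMmono s t hs hst])
  · -- integral bound
    have hφr : 0 ≤ φ r := hφ0 r hr
    -- pointwise bound for t ≥ 0
    have hpt : ∀ t : ℝ, 0 ≤ t → f t * φ (r * α t) ≤ Real.exp (-t) * φ r := by
      intro t ht
      obtain ⟨hα0, hα1⟩ := hi t ht
      have hαnn : 0 ≤ α t := hα0.le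
      -- convexity: φ (α t * r) ≤ α t * φ r
      have hconv : φ (r * α t) ≤ α t * φ r := by
        have := hφconv.2 (Set.mem_Ici.2 hr) (Set.mem_Ici.2 (le_refl (0:ℝ)))
          hαnn (by linarith : (0:ℝ) ≤ 1 - α t) (by ring)
        simp only [smul_eq_mul, mul_zero, add_zero, hφzero] at this
        calc φ (r * α t) = φ (α t * r + (1 - α t) * 0) := by ring_nf
          _ ≤ α t * φ r := by simpa using this
      have hfα : f t * α t ≤ Real.exp (-t) := by
        rw [hαval t, mul_div_assoc']
        rw [div_le_iff₀ (hDpos t ht)]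
        have h1 : f t ≤ 1 + M t := by linarith [hfM t ht]
        nlinarith [Real.exp_pos (-t), hf0 t ht]
      calc f t * φ (r * α t) ≤ f t * (α t * φ r) :=
            mul_le_mul_of_nonneg_left hconv (hf0 t ht)
        _ = (f t * α t) * φ r := by ring
        _ ≤ Real.exp (-t) * φ r := mul_le_mul_of_nonneg_right hfα hφr
    have hmeas : MeasurableSet (Set.Ici (0:ℝ)) := measurableSet_Ici
    have hnn : 0 ≤ᵐ[volume.restrict (Set.Ici (0:ℝ))] fun t => f t * φ (r * α t) := by
      filter_upwards [ae_restrict_mem hmeas] with t ht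
      have hαnn : 0 ≤ α t := (hi t ht).1.le
      exact mul_nonneg (hf0 t ht) (hφ0 _ (mul_nonneg hr hαnn))
    have hle : (fun t => f t * φ (r * α t)) ≤ᵐ[volume.restrict (Set.Ici (0:ℝ))]
        fun t => Real.exp (-t) * φ r := by
      filter_upwards [ae_restrict_mem hmeas] with t ht
      exact hpt t ht
    have hint : IntegrableOn (fun t => Real.exp (-t) * φ r) (Set.Ici (0:ℝ)) := by
      have : IntegrableOn (fun t => Real.exp (-1 * t)) (Set.Ioi (0:ℝ)) :=
        exp_neg_integrableOn_Ioi 0 one_pos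
      have h2 : IntegrableOn (fun t => Real.exp (-t)) (Set.Ici (0:ℝ)) := by
        rw [integrableOn_Ici_iff_integrableOn_Ioi]
        simpa using this
      exact h2.mul_const _
    have := integral_mono_of_nonneg hnn hint hle
    calc ∫ t in Set.Ici (0:ℝ), f t * φ (r * α t) ≤
        ∫ t in Set.Ici (0:ℝ), Real.exp (-t) * φ r := this
      _ = (∫ t in Set.Ici (0:ℝ), Real.exp (-t)) * φ r := integral_mul_const _ _
      _ = 1 * φ r := by
          rw [integral_Ici_eq_integral_Ioi, integral_exp_neg_Ioi_zero]
      _ = φ r := one_mul _
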